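/- Let X and Y be Hilbert spaces, T : X → Y a bounded linear operator with a least-squares projection approximation {(X_n, T_n)}, and fix y ∈ D(T†). Then T_n† y converges in norm to T† y if and only if limsup_{n→∞} ‖T_n† y‖ ≤ ‖T† y‖. -/

import Mathlib

open Filter Topology Metric Submodule ContinuousLinearMap
open scoped RealInnerProductSpace

/-- Orthogonal projection onto a subspace `K` (as an operator `H →L[ℝ] H`),
defined whenever `K` admits orthogonal projections (e.g. `K` closed). -/
noncomputable def orthProj {H : Type*} [NormedAddCommGroup H] [InnerProductSpace ℝ H]
    (K : Submodule ℝ H) : H →L[ℝ] H :=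
  open scoped Classical in
  if h : HasOrthogonalProjection K then
    haveI := h
    K.subtypeL.comp (orthogonalProjection K)
  else 0

lemma orthProj_apply {H : Type*} [NormedAddCommGroup H] [InnerProductSpace ℝ H]
    (K : Submodule ℝ H) [h : HasOrthogonalProjection K] (v : H) :
    orthProj K v = (orthogonalProjection K v : H) := by
  simp [orthProj, dif_pos h]

lemma orthProj_mem {H : Type*} [NormedAddCommGroup H] [InnerProductSpace ℝ H]
    (K : Submodule ℝ H) [h : HasOrthogonalProjection K] (v : H) :
    orthProj K v ∈ K := by
  rw [orthProj_apply]; exact (orthogonalProjection K v).2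

lemma orthProj_pythagoras {H : Type*} [NormedAddCommGroup H] [InnerProductSpace ℝ H]
    (K : Submodule ℝ H) [HasOrthogonalProjection K] (u : H) {v : H} (hv : v ∈ K) :
    ‖u - v‖ ^ 2 = ‖u - orthProj K u‖ ^ 2 + ‖orthProj K u - v‖ ^ 2 := by
  have ha : u - orthProj K u ∈ Kᗮ := by
    rw [orthProj_apply]; exact K.sub_starProjection_mem_orthogonal u
  have hb : orthProj K u - v ∈ K := by
    rw [orthProj_apply]; exact K.sub_mem (orthogonalProjection K u).2 hv
  have hin : ⟪u - orthProj K u, orthProj K u - v⟫ = 0 :=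
    (Submodule.mem_orthogonal' K _).1 ha _ hb
  have h1 : u - v = (u - orthProj K u) + (orthProj K u - v) := by abel
  rw [h1, norm_add_sq_real, hin]
  ring

lemma ker_eq_orth_range_adjoint {X Y : Type*} [NormedAddCommGroup X] [InnerProductSpace ℝ X]
    [CompleteSpace X] [NormedAddCommGroup Y] [InnerProductSpace ℝ Y] [CompleteSpace Y]
    (T : X →L[ℝ] Y) :
    (LinearMap.ker (T : X →ₗ[ℝ] Y) : Submodule ℝ X) = (LinearMap.range (ContinuousLinearMap.adjoint T : Y →ₗ[ℝ] X))ᗮ := by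
  ext u
  simp only [LinearMap.mem_ker, Submodule.mem_orthogonal, ContinuousLinearMap.coe_coe]
  constructor
  · rintro h _ ⟨v, rfl⟩
    rw [ContinuousLinearMap.coe_coe, ContinuousLinearMap.adjoint_inner_left]
    rw [h]
    simp
  · intro h
    have := h (ContinuousLinearMap.adjoint T (T u)) ⟨T u, by simp⟩
    rw [ContinuousLinearMap.adjoint_inner_left] at this
    simpa [inner_self_eq_zero] using this

variable {X Y : Type*} [NormedAddCommGroup X] [InnerProductSpace ℝ X] [CompleteSpace X]
  [NormedAddCommGroup Y] [InnerProductSpace ℝ Y] [CompleteSpace Y]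

/-- For fixed `y ∈ D(T†)`: `Tₙ†y → T†y` in norm iff `limsup ‖Tₙ†y‖ ≤ ‖T†y‖`. -/
theorem stmt17
    (T : X →L[ℝ] Y) (Xn : ℕ → Submodule ℝ X)
    (hfin : ∀ n, FiniteDimensional ℝ (Xn n))
    (hinf : ¬ FiniteDimensional ℝ X)
    (hproj : ∀ x : X, Tendsto (fun n => orthProj (Xn n) x) atTop (𝓝 x))
    (Tn : ℕ → X →L[ℝ] Y) (hTn : ∀ n, Tn n = T.comp (orthProj (Xn n)))
    (Tdag : Y → X)
    (hTdag : ∀ y ∈ (LinearMap.range (T : X →ₗ[ℝ] Y) ⊔ (LinearMap.range (T : X →ₗ[ℝ] Y))ᗮ : Submodule ℝ Y),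
      Tdag y ∈ (LinearMap.ker (T : X →ₗ[ℝ] Y))ᗮ ∧
        T (Tdag y) = orthProj (LinearMap.range (T : X →ₗ[ℝ] Y)).topologicalClosure y)
    (Tdagn : ℕ → Y → X)
    (hTdagn : ∀ n (y : Y), Tdagn n y ∈ (LinearMap.ker (Tn n : X →ₗ[ℝ] Y))ᗮ ∧
      (Tn n) (Tdagn n y) = orthProj ((Xn n).map (T : X →ₗ[ℝ] Y)) y)
    (y : Y) (hy : y ∈ (LinearMap.range (T : X →ₗ[ℝ] Y) ⊔ (LinearMap.range (T : X →ₗ[ℝ] Y))ᗮ : Submodule ℝ Y)) :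
    Tendsto (fun n => Tdagn n y) atTop (𝓝 (Tdag y)) ↔
      Filter.limsup (fun n => (‖Tdagn n y‖ : EReal)) atTop ≤ (‖Tdag y‖ : EReal) := by
  obtain ⟨hxker, hxT⟩ := hTdag y hy
  constructor
  · -- easy direction
    intro h
    have hn : Tendsto (fun n => ‖Tdagn n y‖) atTop (𝓝 ‖Tdag y‖) := h.norm
    have h2 : Tendsto (fun n => (‖Tdagn n y‖ : EReal)) atTop (𝓝 (‖Tdag y‖ : EReal)) :=
      (continuous_coe_real_ereal.tendsto _).comp hn
    exact le_of_eq h2.limsup_eq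
  · intro hls
    set x := Tdag y with hxdef
    -- instances
    haveI hOPn : ∀ n, HasOrthogonalProjection (Xn n) := fun n => by
      haveI := hfin n; infer_instance
    haveI hFMn : ∀ n, FiniteDimensional ℝ ((Xn n).map (T : X →ₗ[ℝ] Y)) := fun n => by
      haveI := hfin n
      exact Module.Finite.map (Xn n) (T : X →ₗ[ℝ] Y)
    haveI hOMn : ∀ n, HasOrthogonalProjection ((Xn n).map (T : X →ₗ[ℝ] Y)) := fun n => by
      haveI := hFMn n; infer_instance
    -- xn ∈ Xn
    have hxnXn : ∀ n, Tdagn n y ∈ Xn n := by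
      intro n
      have h1 : (Xn n)ᗮ ≤ LinearMap.ker (Tn n : X →ₗ[ℝ] Y) := by
        intro u hu
        rw [hTn n, LinearMap.mem_ker]
        have h0 : orthProj (Xn n) u = 0 := by
          rw [orthProj_apply]
          rw [orthogonalProjection_mem_subspace_orthogonalComplement_eq_zero hu]
          simp
        simp [ContinuousLinearMap.comp_apply, h0]
      have h2 : (LinearMap.ker (Tn n : X →ₗ[ℝ] Y))ᗮ ≤ (Xn n)ᗮᗮ := Submodule.orthogonal_le h1
      rw [Submodule.orthogonal_orthogonal] at h2
      exact h2 (hTdagn n y).1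
    -- T xn = Qn y
    have hTxn : ∀ n, T (Tdagn n y) = orthProj ((Xn n).map (T : X →ₗ[ℝ] Y)) y := by
      intro n
      have h1 := (hTdagn n y).2
      rw [hTn n] at h1
      rw [← h1]
      simp only [ContinuousLinearMap.comp_apply]
      congr 1
      rw [orthProj_apply]
      exact (Submodule.starProjection_eq_self_iff.2 (hxnXn n)).symm
    -- T (Pn x) → T x
    have hTPnx : Tendsto (fun n => T (orthProj (Xn n) x)) atTop (𝓝 (T x)) :=
      (T.continuous.tendsto _).comp (hproj x)
    -- y - Tx ⊥ closure range T
    have hyTx : ∀ w ∈ (LinearMap.range (T : X →ₗ[ℝ] Y)).topologicalClosure, ⟪y - T x, w⟫ = 0 := by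
      intro w hw
      rw [hxT, orthProj_apply]
      exact (Submodule.mem_orthogonal' _ _).1 (Submodule.sub_starProjection_mem_orthogonal y) w hw
    have hTxmem : T x ∈ (LinearMap.range (T : X →ₗ[ℝ] Y)).topologicalClosure :=
      (LinearMap.range (T : X →ₗ[ℝ] Y)).le_topologicalClosure ⟨x, rfl⟩
    -- key inequality
    have key : ∀ n, ‖T (Tdagn n y) - T x‖ ^ 2
        ≤ ‖y - T (orthProj (Xn n) x)‖ ^ 2 - ‖y - T x‖ ^ 2 := by
      intro n
      have hvmem : T (orthProj (Xn n) x) ∈ (Xn n).map (T : X →ₗ[ℝ] Y) :=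
        ⟨orthProj (Xn n) x, orthProj_mem _ _, rfl⟩
      have hpy := orthProj_pythagoras ((Xn n).map (T : X →ₗ[ℝ] Y)) y hvmem
      -- ‖y - Qn y‖² = ‖y - Tx‖² + ‖Tx - Qn y‖²
      have hQmem : orthProj ((Xn n).map (T : X →ₗ[ℝ] Y)) y ∈ (LinearMap.range (T : X →ₗ[ℝ] Y)).topologicalClosure := by
        apply (LinearMap.range (T : X →ₗ[ℝ] Y)).le_topologicalClosure
        obtain ⟨u, -, hu⟩ := orthProj_mem ((Xn n).map (T : X →ₗ[ℝ] Y)) y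
        exact ⟨u, hu⟩
      have hsplit : ‖y - orthProj ((Xn n).map (T : X →ₗ[ℝ] Y)) y‖ ^ 2
          = ‖y - T x‖ ^ 2 + ‖T x - orthProj ((Xn n).map (T : X →ₗ[ℝ] Y)) y‖ ^ 2 := by
        have h1 : y - orthProj ((Xn n).map (T : X →ₗ[ℝ] Y)) y
            = (y - T x) + (T x - orthProj ((Xn n).map (T : X →ₗ[ℝ] Y)) y) := by abel
        rw [h1, norm_add_sq_real, hyTx _ (Submodule.sub_mem _ hTxmem hQmem)]
        ring
      rw [hTxn n, norm_sub_rev]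
      linarith [sq_nonneg ‖orthProj ((Xn n).map (T : X →ₗ[ℝ] Y)) y - T (orthProj (Xn n) x)‖]
    -- T xn → T x
    have hTxn_t : Tendsto (fun n => T (Tdagn n y)) atTop (𝓝 (T x)) := by
      have hRHS : Tendsto (fun n => ‖y - T (orthProj (Xn n) x)‖ ^ 2 - ‖y - T x‖ ^ 2)
          atTop (𝓝 0) := by
        have h1 : Tendsto (fun n => ‖y - T (orthProj (Xn n) x)‖ ^ 2) atTop
            (𝓝 (‖y - T x‖ ^ 2)) := by
          have := ((tendsto_const_nhds (x := y)).sub hTPnx).norm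
          exact this.pow 2
        simpa using h1.sub (tendsto_const_nhds :
          Tendsto (fun _ : ℕ => ‖y - T x‖ ^ 2) atTop (𝓝 (‖y - T x‖ ^ 2)))
      have hsq : Tendsto (fun n => ‖T (Tdagn n y) - T x‖ ^ 2) atTop (𝓝 0) :=
        squeeze_zero (fun n => sq_nonneg _) key hRHS
      rw [tendsto_iff_norm_sub_tendsto_zero]
      have := hsq.sqrt
      simpa [Real.sqrt_sq (norm_nonneg _)] using this
    -- x in closure of range adjoint
    have hx_cl : x ∈ closure ((LinearMap.range (ContinuousLinearMap.adjoint T : Y →ₗ[ℝ] X) : Submodule ℝ X)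
        : Set X) := by
      rw [← Submodule.topologicalClosure_coe, ← Submodule.orthogonal_orthogonal_eq_closure]
      rw [ker_eq_orth_range_adjoint T] at hxker
      exact hxker
    -- eventual bound on norms
    have hbound : ∀ᶠ n in atTop, ‖Tdagn n y‖ < ‖x‖ + 1 := by
      have h1 : Filter.limsup (fun n => (‖Tdagn n y‖ : EReal)) atTop < ((‖x‖ + 1 : ℝ) : EReal) :=
        lt_of_le_of_lt hls (by exact_mod_cast lt_add_one ‖x‖)
      filter_upwards [Filter.eventually_lt_of_limsup_lt h1] with n hn
      exact_mod_cast hn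
    -- inner product convergence
    have hinner : Tendsto (fun n => ⟪Tdagn n y, x⟫) atTop (𝓝 (‖x‖ ^ 2)) := by
      rw [Metric.tendsto_nhds]
      intro ε hε
      have hδpos : 0 < ε / (2 * (2 * ‖x‖ + 2)) := by positivity
      obtain ⟨w', hw'mem, hw'⟩ := Metric.mem_closure_iff.1 hx_cl _ hδpos
      obtain ⟨w, rfl⟩ := hw'mem
      have hiw : Tendsto (fun n => ⟪T (Tdagn n y), w⟫) atTop (𝓝 ⟪T x, w⟫) :=
        hTxn_t.inner tendsto_const_nhds
      have hiw' := Metric.tendsto_nhds.1 hiw (ε / 2) (half_pos hε)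
      filter_upwards [hbound, hiw'] with n hn1 hn2
      rw [Real.dist_eq] at hn2 ⊢
      have e1 : ⟪Tdagn n y, x⟫ - ‖x‖ ^ 2
          = ⟪Tdagn n y - x, x - (ContinuousLinearMap.adjoint T) w⟫
            + (⟪T (Tdagn n y), w⟫ - ⟪T x, w⟫) := by
        simp only [inner_sub_left, inner_sub_right, map_sub,
          ContinuousLinearMap.adjoint_inner_right, real_inner_self_eq_norm_sq]
        ring
      have hd : ‖x - (ContinuousLinearMap.adjoint T) w‖ < ε / (2 * (2 * ‖x‖ + 2)) := by
        rw [dist_eq_norm] at hw'; exact hw'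
      have hb1 : |⟪Tdagn n y - x, x - (ContinuousLinearMap.adjoint T) w⟫| < ε / 2 := by
        calc |⟪Tdagn n y - x, x - (ContinuousLinearMap.adjoint T) w⟫|
            ≤ ‖Tdagn n y - x‖ * ‖x - (ContinuousLinearMap.adjoint T) w‖ :=
              abs_real_inner_le_norm _ _
          _ < ε / 2 := by
              have h3 : ‖Tdagn n y - x‖ ≤ 2 * ‖x‖ + 2 := by
                have := norm_sub_le (Tdagn n y) x
                nlinarith
              have h4 : ‖Tdagn n y - x‖ * ‖x - (ContinuousLinearMap.adjoint T) w‖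
                  ≤ (2 * ‖x‖ + 2) * ‖x - (ContinuousLinearMap.adjoint T) w‖ :=
                mul_le_mul_of_nonneg_right h3 (norm_nonneg _)
              have h5 : (2 * ‖x‖ + 2) * ‖x - (ContinuousLinearMap.adjoint T) w‖
                  < (2 * ‖x‖ + 2) * (ε / (2 * (2 * ‖x‖ + 2))) :=
                mul_lt_mul_of_pos_left hd (by positivity)
              have hne : (2 * ‖x‖ + 2) ≠ 0 := by positivity
              have h6 : (2 * ‖x‖ + 2) * (ε / (2 * (2 * ‖x‖ + 2))) = ε / 2 := by
                field_simp
              linarith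
      rw [e1]
      calc |⟪Tdagn n y - x, x - (ContinuousLinearMap.adjoint T) w⟫
            + (⟪T (Tdagn n y), w⟫ - ⟪T x, w⟫)|
          ≤ |⟪Tdagn n y - x, x - (ContinuousLinearMap.adjoint T) w⟫|
            + |⟪T (Tdagn n y), w⟫ - ⟪T x, w⟫| := abs_add_le _ _
        _ < ε / 2 + ε / 2 := add_lt_add hb1 hn2
        _ = ε := add_halves ε
    -- conclude
    have hfinal : Tendsto (fun n => ‖Tdagn n y - x‖ ^ 2) atTop (𝓝 0) := by
      rw [Metric.tendsto_nhds]
      intro ε hε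
      set c := Real.sqrt (‖x‖ ^ 2 + ε / 2) with hcdef
      have hc2 : c ^ 2 = ‖x‖ ^ 2 + ε / 2 := Real.sq_sqrt (by positivity)
      have hcx : ‖x‖ < c := by
        nlinarith [Real.sqrt_nonneg (‖x‖ ^ 2 + ε / 2), norm_nonneg x]
      have hcE : (‖x‖ : EReal) < (c : EReal) := by exact_mod_cast hcx
      have h1 := Filter.eventually_lt_of_limsup_lt (lt_of_le_of_lt hls hcE)
      have h2 := Metric.tendsto_nhds.1 hinner (ε / 4) (by positivity)
      filter_upwards [h1, h2] with n hn1 hn2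
      have hn1' : ‖Tdagn n y‖ < c := by exact_mod_cast hn1
      rw [Real.dist_eq] at hn2 ⊢
      have habs := abs_lt.1 hn2
      have hexp : ‖Tdagn n y - x‖ ^ 2 = ‖Tdagn n y‖ ^ 2 - 2 * ⟪Tdagn n y, x⟫ + ‖x‖ ^ 2 :=
        norm_sub_sq_real _ _
      have hnn : (0:ℝ) ≤ ‖Tdagn n y - x‖ ^ 2 := sq_nonneg _
      rw [sub_zero, abs_of_nonneg hnn, hexp]
      nlinarith [norm_nonneg (Tdagn n y)]
    rw [tendsto_iff_norm_sub_tendsto_zero]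
    have := hfinal.sqrt
    simpa [Real.sqrt_sq (norm_nonneg _)] using this
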